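/- Let N be a finite-dimensional commutative associative ℝ-algebra (not necessarily unital) of dimension m ≥ 1 in which every element is nilpotent. Then there exists a basis b_1, …, b_m of N such that for every a ∈ N and every i = 1, …, m one has a·b_i ∈ span{b_{i+1}, …, b_m} (where the span of the empty family is {0}); that is, N admits a Jordan–Hölder basis. -/

import Mathlib

section
variable {N : Type*} [NonUnitalCommRing N] [Module ℝ N]
    [SMulCommClass ℝ N N] [IsScalarTower ℝ N N]

def mulTopJH (M : Submodule ℝ N) : Submodule ℝ N :=
  Submodule.span ℝ {x : N | ∃ a : N, ∃ y ∈ M, x = a * y}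

omit [SMulCommClass ℝ N N] [IsScalarTower ℝ N N] in
lemma mulTopJH_mono : Monotone (mulTopJH (N := N)) := by
  intro M M' h
  apply Submodule.span_mono
  rintro x ⟨a, y, hy, rfl⟩
  exact ⟨a, y, h hy, rfl⟩

omit [SMulCommClass ℝ N N] [IsScalarTower ℝ N N] in
lemma mul_mem_mulTopJH (a : N) {y : N} {M : Submodule ℝ N} (hy : y ∈ M) :
    a * y ∈ mulTopJH M :=
  Submodule.subset_span ⟨a, y, hy, rfl⟩

omit [SMulCommClass ℝ N N] [IsScalarTower ℝ N N] in
lemma auxJH [FiniteDimensional ℝ N]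
    (hs : ∃ s : ℕ, (mulTopJH (N := N))^[s] ⊤ = ⊥) :
    ∀ k : ℕ, ∀ M : Submodule ℝ N, mulTopJH M ≤ M → Module.finrank ℝ M = k →
    ∃ b : Fin k → N, LinearIndependent ℝ b ∧ Submodule.span ℝ (Set.range b) = M ∧
      ∀ a : N, ∀ i : Fin k, a * b i ∈ Submodule.span ℝ (b '' {j | i < j}) := by
  intro k
  induction k using Nat.strong_induction_on with
  | _ k IH =>
  intro M hMid hMr
  rcases Nat.eq_zero_or_pos k with hk | hk
  · subst hk
    have hM : M = ⊥ := Submodule.finrank_eq_zero.mp hMr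
    exact ⟨Fin.elim0, linearIndependent_empty_type,
      by simp [Set.range_eq_empty, hM], fun a i => i.elim0⟩
  · have hMne : M ≠ ⊥ := by
      intro h
      rw [h, finrank_bot] at hMr
      omega
    set M' := mulTopJH M with hM'def
    have hlt : M' < M := by
      rcases lt_or_eq_of_le hMid with h | h
      · exact h
      · exfalso
        obtain ⟨s, hsb⟩ := hs
        have hchain : ∀ j, M ≤ (mulTopJH (N := N))^[j] ⊤ := by
          intro j
          induction j with
          | zero => exact le_top
          | succ j ihj =>
            rw [Function.iterate_succ_apply']
            calc M = mulTopJH M := h.symm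
            _ ≤ mulTopJH ((mulTopJH (N := N))^[j] ⊤) := mulTopJH_mono ihj
        exact hMne (le_bot_iff.mp (hsb ▸ hchain s))
    set d := Module.finrank ℝ M' with hd_def
    have hd : d < k := hMr ▸ Submodule.finrank_lt_finrank_of_lt hlt
    obtain ⟨b, hbI, hbS, hbP⟩ :=
      IH d hd M' (mulTopJH_mono hlt.le) rfl
    -- complement construction
    let p : Submodule ℝ ↥M := M'.comap M.subtype
    obtain ⟨q, hq⟩ := Submodule.exists_isCompl p
    have hpd : Module.finrank ℝ ↥p = d := (Submodule.comapSubtypeEquivOfLe hlt.le).finrank_eq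
    have hqd : Module.finrank ℝ ↥q = k - d := by
      have h1 := Submodule.finrank_add_eq_of_isCompl hq
      rw [hpd, hMr] at h1
      omega
    let bq := Module.finBasis ℝ ↥q
    let f : ↥M →ₗ[ℝ] N := M.subtype
    let g : ↥q →ₗ[ℝ] ↥M := q.subtype
    let c : Fin (k - d) → N := fun i => ((bq (⇑(finCongr hqd.symm) i) : ↥M) : N)
    have hc_eq : c = ⇑(f ∘ₗ g) ∘ (bq ∘ ⇑(finCongr hqd.symm)) := rfl
    have hcI : LinearIndependent ℝ c := by
      rw [hc_eq]
      exact ((bq.linearIndependent.comp _ (finCongr hqd.symm).injective).map'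
        (f ∘ₗ g)
        (LinearMap.ker_eq_bot.mpr ((Submodule.injective_subtype M).comp
          (Submodule.injective_subtype q))))
    have hcS : Submodule.span ℝ (Set.range c) = Submodule.map f (Submodule.map g ⊤) := by
      rw [hc_eq, Set.range_comp, Submodule.span_image,
        (finCongr hqd.symm).surjective.range_comp,
        bq.span_eq, Submodule.map_comp]
    have hmapq : Submodule.map g ⊤ = q := Submodule.map_subtype_top q
    have hM'map : Submodule.map f p = M' := by
      rw [Submodule.map_comap_subtype]
      exact inf_eq_right.mpr hlt.le
    have hcS' : Submodule.span ℝ (Set.range c) = Submodule.map f q := by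
      rw [hcS, hmapq]
    have hdisj : Disjoint (Submodule.span ℝ (Set.range c)) (Submodule.span ℝ (Set.range b)) := by
      rw [hcS', hbS, ← hM'map, disjoint_iff, ← Submodule.map_inf f (Submodule.injective_subtype M),
        disjoint_iff.mp hq.disjoint.symm, Submodule.map_bot]
    let v : Fin (k - d) ⊕ Fin d → N := Sum.elim c b
    have hvI : LinearIndependent ℝ v := hcI.sum_type hbI hdisj
    have hvS : Submodule.span ℝ (Set.range v) = M := by
      show Submodule.span ℝ (Set.range (Sum.elim c b)) = M
      rw [Set.Sum.elim_range, Submodule.span_union, hcS', hbS, ← hM'map,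
        ← Submodule.map_sup]
      have hsup : q ⊔ p = ⊤ := by rw [sup_comm]; exact hq.codisjoint.eq_top
      rw [hsup, Submodule.map_subtype_top]
    have he : (k - d) + d = k := by omega
    let σ : Fin k ≃ (Fin (k - d) ⊕ Fin d) := (finCongr he.symm).trans finSumFinEquiv.symm
    refine ⟨v ∘ σ, hvI.comp σ σ.injective, by rw [σ.surjective.range_comp, hvS], ?_⟩
    have hval1 : ∀ i₀ : Fin (k - d), ((σ.symm (Sum.inl i₀)) : ℕ) = (i₀ : ℕ) := by
      intro i₀; simp [σ]
    have hval2 : ∀ j₀ : Fin d, ((σ.symm (Sum.inr j₀)) : ℕ) = (k - d) + (j₀ : ℕ) := by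
      intro j₀; simp [σ]
    have hb'val : ∀ x, (v ∘ σ) (σ.symm x) = v x := by
      intro x; simp
    intro a i
    have hi : i = σ.symm (σ i) := (σ.symm_apply_apply i).symm
    rcases hσi : σ i with i₀ | i₀
    · -- first block: c part
      have hbi : (v ∘ σ) i ∈ M := by
        show v (σ i) ∈ M
        rw [hσi]
        show ((bq (⇑(finCongr hqd.symm) i₀) : ↥M) : N) ∈ M
        exact (bq (⇑(finCongr hqd.symm) i₀) : ↥M).2
      have h1 : a * (v ∘ σ) i ∈ Submodule.span ℝ (Set.range b) := by
        rw [hbS]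
        exact mul_mem_mulTopJH a hbi
      refine Submodule.span_mono ?_ h1
      rintro x ⟨j₀, rfl⟩
      refine ⟨σ.symm (Sum.inr j₀), ?_, hb'val (Sum.inr j₀)⟩
      show i < σ.symm (Sum.inr j₀)
      rw [Fin.lt_def, hval2]
      have : (i : ℕ) = (i₀ : ℕ) := by rw [hi, hσi, hval1]
      omega
    · -- second block: b part
      have hval : (v ∘ σ) i = b i₀ := by show v (σ i) = b i₀; rw [hσi]; rfl
      rw [hval]
      refine Submodule.span_mono ?_ (hbP a i₀)
      rintro x ⟨j₀, hj₀, rfl⟩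
      refine ⟨σ.symm (Sum.inr j₀), ?_, by rw [hb'val (Sum.inr j₀)]; rfl⟩
      show i < σ.symm (Sum.inr j₀)
      rw [Fin.lt_def, hval2]
      have h2 : (i : ℕ) = (k - d) + (i₀ : ℕ) := by rw [hi, hσi, hval2]
      have : (i₀ : ℕ) < (j₀ : ℕ) := hj₀
      omega

lemma mulTopJH_iterate_eq_bot [FiniteDimensional ℝ N]
    (hnil : ∀ a : N, ∃ n : ℕ, (fun x => a * x)^[n] a = 0) :
    ∃ s : ℕ, (mulTopJH (N := N))^[s] ⊤ = ⊥ := by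
  classical
  haveI : FiniteDimensional ℝ (Unitization ℝ N) := by
    let f : ℝ × N →ₗ[ℝ] Unitization ℝ N :=
      { toFun := fun p => Unitization.inl p.1 + Unitization.inr p.2
        map_add' := by intro p q; apply Unitization.ext <;> simp
        map_smul' := by intro r p; apply Unitization.ext <;> simp }
    exact Module.Finite.of_surjective f (fun x => ⟨(x.fst, x.snd), by
      simp [f, Unitization.inl_fst_add_inr_snd_eq]⟩)
  haveI : IsArtinianRing (Unitization ℝ N) :=
    isArtinian_of_tower ℝ (inferInstance : IsArtinian ℝ (Unitization ℝ N))
  obtain ⟨s, hs⟩ := IsArtinianRing.isNilpotent_jacobson_bot (R := Unitization ℝ N)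
  set J : Ideal (Unitization ℝ N) := Ideal.jacobson ⊥ with hJ
  -- every inr x is in J
  have hmemJ : ∀ x : N, (x : Unitization ℝ N) ∈ J := by
    intro x
    apply Ideal.radical_le_jacobson
    rw [← Ideal.zero_eq_bot, ← nilradical, mem_nilradical]
    obtain ⟨n, hn⟩ := hnil x
    refine ⟨n + 1, ?_⟩
    have key : ∀ k : ℕ, (x : Unitization ℝ N) ^ (k + 1) =
        (((fun y => x * y)^[k] x : N) : Unitization ℝ N) := by
      intro k
      induction k with
      | zero => simp
      | succ k ih =>
        rw [pow_succ, ih, Function.iterate_succ_apply', ← Unitization.inr_mul, mul_comm]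
    rw [key n, hn, Unitization.inr_zero]
  -- elements of the iterate chain map into powers of J
  have key : ∀ k : ℕ, ∀ x ∈ (mulTopJH (N := N))^[k] (⊤ : Submodule ℝ N),
      (x : Unitization ℝ N) ∈ J ^ (k + 1) := by
    intro k
    induction k with
    | zero => intro x _; simpa using hmemJ x
    | succ k ih =>
      intro x hx
      rw [Function.iterate_succ_apply'] at hx
      induction hx using Submodule.span_induction with
      | mem z hz =>
        obtain ⟨a, y, hy, rfl⟩ := hz
        rw [Unitization.inr_mul, pow_succ, mul_comm ((a : Unitization ℝ N))]
        exact Ideal.mul_mem_mul (ih y hy) (hmemJ a)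
      | zero => simp
      | add z w _ _ hz hw => rw [Unitization.inr_add]; exact add_mem hz hw
      | smul c z _ hz =>
        rw [Unitization.inr_smul, Algebra.smul_def]
        exact Ideal.mul_mem_left _ _ hz
  refine ⟨s, ?_⟩
  rw [eq_bot_iff]
  intro x hx
  have h1 : (x : Unitization ℝ N) ∈ J ^ (s + 1) := key s x hx
  have h2 : J ^ (s + 1) ≤ J ^ s := Ideal.pow_le_pow_right (Nat.le_succ s)
  have : (x : Unitization ℝ N) = 0 := by
    have := h2 h1
    rw [hs] at this
    simpa using this
  simpa using Unitization.inr_injective (by simpa using this)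


end

/-- Every finite-dimensional commutative associative ℝ-algebra
(not necessarily unital) of dimension `m ≥ 1` in which every element is nilpotent
admits a Jordan–Hölder basis `b_1, …, b_m`: for every `a ∈ N` and every `i`,
`a·b_i ∈ span{b_{i+1}, …, b_m}`.  (Nilpotency of `a` is expressed as
`a * (a * (⋯ * a)) = 0` for some number of factors, via iteration of `x ↦ a * x`.) -/
theorem statement7 (m : ℕ) (hm : 1 ≤ m)
    (N : Type*) [NonUnitalCommRing N] [Module ℝ N]
    [SMulCommClass ℝ N N] [IsScalarTower ℝ N N]
    [FiniteDimensional ℝ N] (hdim : Module.finrank ℝ N = m)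
    (hnil : ∀ a : N, ∃ n : ℕ, (fun x => a * x)^[n] a = 0) :
    ∃ B : Module.Basis (Fin m) ℝ N, ∀ a : N, ∀ i : Fin m,
      a * B i ∈ Submodule.span ℝ {x : N | ∃ j : Fin m, i < j ∧ x = B j} := by
  obtain ⟨b, hbI, hbS, hbP⟩ := auxJH (mulTopJH_iterate_eq_bot hnil) m
    (⊤ : Submodule ℝ N) le_top (by rw [finrank_top]; exact hdim)
  refine ⟨Module.Basis.mk hbI (by rw [hbS]), ?_⟩
  intro a i
  have hset : {x : N | ∃ j : Fin m, i < j ∧ x = (Module.Basis.mk hbI (by rw [hbS])) j}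
      = b '' {j | i < j} := by
    ext x
    simp only [Set.mem_image, Set.mem_setOf_eq, Module.Basis.mk_apply]
    constructor
    · rintro ⟨j, hj, rfl⟩; exact ⟨j, hj, rfl⟩
    · rintro ⟨j, hj, rfl⟩; exact ⟨j, hj, rfl⟩
  rw [hset, Module.Basis.mk_apply]
  exact hbP a i
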